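/- If real-rooted polynomials f_1,…,f_k of degree n with positive leading coefficients have a common interlacing, then for every index 1 ≤ j ≤ n there exist i and i' such that λ_j(f_i) ≥ λ_j(f_1 + … + f_k) ≥ λ_j(f_{i'}), and in particular f_1 + … + f_k is real-rooted. -/

import Mathlib

open Polynomial BigOperators Finset

lemma aux_prod_sign {d : ℕ} (t : ℝ) (y : Fin d → ℝ) (A : Finset (Fin d))
    (h1 : ∀ j ∈ A, t < y j) (h2 : ∀ j ∉ A, y j < t) :
    0 < (-1 : ℝ) ^ A.card * ∏ j, (t - y j) := by
  rw [← Finset.prod_mul_prod_compl A fun j => (t - y j)]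
  have hA : (-1 : ℝ) ^ A.card * ∏ j ∈ A, (t - y j) = ∏ j ∈ A, (y j - t) := by
    rw [← Finset.prod_const (-1 : ℝ), ← Finset.prod_mul_distrib]
    exact Finset.prod_congr rfl fun j _ => by ring
  have h1' : 0 < ∏ j ∈ A, (y j - t) := Finset.prod_pos fun j hj => sub_pos.2 (h1 j hj)
  have h2' : 0 < ∏ j ∈ Aᶜ, (t - y j) :=
    Finset.prod_pos fun j hj => sub_pos.2 (h2 j (Finset.mem_compl.1 hj))
  calc (0:ℝ) < (∏ j ∈ A, (y j - t)) * ∏ j ∈ Aᶜ, (t - y j) := mul_pos h1' h2'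
    _ = (-1 : ℝ) ^ A.card * ((∏ j ∈ A, (t - y j)) * ∏ j ∈ Aᶜ, (t - y j)) := by
        rw [← hA]; ring

lemma aux_exists_root_Ioo (F : Polynomial ℝ) {a b : ℝ} (hab : a < b)
    (h : F.eval a * F.eval b < 0) : ∃ x, x ∈ Set.Ioo a b ∧ F.eval x = 0 := by
  have hcont : ContinuousOn (fun t => F.eval t) (Set.Icc a b) := F.continuous.continuousOn
  rcases lt_or_ge (F.eval a) 0 with ha | ha
  · have hb : 0 < F.eval b := by nlinarith
    obtain ⟨x, hx, hx0⟩ := intermediate_value_Ioo hab.le hcont (Set.mem_Ioo.2 ⟨ha, hb⟩)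
    exact ⟨x, hx, hx0⟩
  · have ha' : 0 < F.eval a := lt_of_le_of_ne ha (by rintro h0; rw [← h0] at h; nlinarith)
    have hb : F.eval b < 0 := by nlinarith
    obtain ⟨x, hx, hx0⟩ := intermediate_value_Ioo' hab.le hcont (Set.mem_Ioo.2 ⟨hb, ha'⟩)
    exact ⟨x, hx, hx0⟩

lemma aux_coeff_continuous : ∀ (d t : ℕ),
    Continuous fun y : Fin d → ℝ => (∏ j, (X - C (y j))).coeff t := by
  intro d
  induction d with
  | zero => intro t; simp only [Finset.univ_eq_empty, Finset.prod_empty]; exact continuous_const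
  | succ d ih =>
    intro t
    have hcompSucc : Continuous fun y : Fin (d + 1) → ℝ => (fun j : Fin d => y j.succ) :=
      continuous_pi fun j => continuous_apply j.succ
    have expand : ∀ y : Fin (d + 1) → ℝ, (∏ j, (X - C (y j))).coeff t =
        (X * ∏ j : Fin d, (X - C (y j.succ))).coeff t
          - y 0 * (∏ j : Fin d, (X - C (y j.succ))).coeff t := by
      intro y
      rw [Fin.prod_univ_succ, sub_mul, Polynomial.coeff_sub, Polynomial.coeff_C_mul]
    cases t with
    | zero =>
      have : Continuous fun y : Fin (d + 1) → ℝ =>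
          (0 : ℝ) - y 0 * (∏ j : Fin d, (X - C (y j.succ))).coeff 0 :=
        continuous_const.sub ((continuous_apply 0).mul ((ih 0).comp hcompSucc))
      refine this.congr fun y => ?_
      rw [expand y]
      simp [Polynomial.mul_coeff_zero]
    | succ t' =>
      have : Continuous fun y : Fin (d + 1) → ℝ =>
          (∏ j : Fin d, (X - C (y j.succ))).coeff t'
            - y 0 * (∏ j : Fin d, (X - C (y j.succ))).coeff (t' + 1) :=
        ((ih t').comp hcompSucc).sub ((continuous_apply 0).mul ((ih (t' + 1)).comp hcompSucc))
      refine this.congr fun y => ?_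
      rw [expand y, Polynomial.coeff_X_mul]

lemma aux_strict (n k : ℕ) (hk : 0 < k) (c : Fin k → ℝ) (β : Fin k → Fin (n + 1) → ℝ)
    (γ : Fin n → ℝ) (hc : ∀ i, 0 < c i) (hβ : ∀ i, StrictAnti (β i))
    (hint : ∀ i, ∀ j : Fin n, γ j < β i j.castSucc ∧ β i j.succ < γ j) :
    ∃ x : Fin (n + 1) → ℝ, StrictAnti x ∧
      (∑ i, C (c i) * ∏ j, (X - C (β i j))) = C (∑ i, c i) * ∏ j, (X - C (x j)) ∧
      ∀ j : Fin (n + 1), (∃ i, x j ≤ β i j) ∧ (∃ i, β i j ≤ x j) := by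
  classical
  haveI : Nonempty (Fin k) := ⟨⟨0, hk⟩⟩
  set F : Polynomial ℝ := ∑ i, C (c i) * ∏ j, (X - C (β i j)) with hF
  set i0 : Fin k := ⟨0, hk⟩
  -- global bounds
  obtain ⟨T, hT⟩ : ∃ T, ∀ i j, β i j < T :=
    ⟨(Finset.univ.sup' univ_nonempty fun p : Fin k × Fin (n + 1) => β p.1 p.2) + 1,
      fun i j => lt_of_le_of_lt (Finset.le_sup' (fun p : Fin k × Fin (n+1) => β p.1 p.2) (mem_univ (i, j))) (lt_add_one _)⟩
  obtain ⟨L, hL⟩ : ∃ L, ∀ i j, L < β i j :=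
    ⟨(Finset.univ.inf' univ_nonempty fun p : Fin k × Fin (n + 1) => β p.1 p.2) - 1,
      fun i j => lt_of_lt_of_le (sub_one_lt _) (Finset.inf'_le (fun p : Fin k × Fin (n+1) => β p.1 p.2) (mem_univ (i, j)))⟩
  set a : Fin (n + 1) → ℝ := Fin.snoc γ L with ha
  set b : Fin (n + 1) → ℝ := Fin.cons T γ with hb
  have hab1 : ∀ i j, a j < β i j := by
    intro i j
    induction j using Fin.lastCases with
    | last => simpa [ha, Fin.snoc_last] using hL i _
    | cast m => simpa [ha, Fin.snoc_castSucc] using (hint i m).1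
  have hab2 : ∀ i j, β i j < b j := by
    intro i j
    induction j using Fin.cases with
    | zero => simpa [hb] using hT i _
    | succ m => simpa [hb] using (hint i m).2
  have habj : ∀ j, a j < b j := fun j => (hab1 i0 j).trans (hab2 i0 j)
  -- general sign lemma
  have hFeval : ∀ t : ℝ, F.eval t = ∑ i, c i * ∏ m, (t - β i m) := by
    intro t
    rw [hF, Polynomial.eval_finset_sum]
    refine Finset.sum_congr rfl fun i _ => ?_
    simp [Polynomial.eval_prod]
  have hsgen : ∀ (t : ℝ) (A : Finset (Fin (n + 1))),
      (∀ i, ∀ m ∈ A, t < β i m) → (∀ i, ∀ m ∉ A, β i m < t) →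
      0 < (-1 : ℝ) ^ A.card * F.eval t := by
    intro t A h1 h2
    rw [hFeval, Finset.mul_sum]
    refine Finset.sum_pos (fun i _ => ?_) univ_nonempty
    have := aux_prod_sign t (β i) A (h1 i) (h2 i)
    calc (0:ℝ) < c i * ((-1 : ℝ) ^ A.card * ∏ m, (t - β i m)) := mul_pos (hc i) this
      _ = (-1 : ℝ) ^ A.card * (c i * ∏ m, (t - β i m)) := by ring
  -- sign at the γ points
  have hSG : ∀ m : Fin n, 0 < (-1 : ℝ) ^ ((m : ℕ) + 1) * F.eval (γ m) := by
    intro m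
    have hcard : (Finset.Iic m.castSucc).card = (m : ℕ) + 1 := by
      rw [Fin.card_Iic]; simp
    have := hsgen (γ m) (Finset.Iic m.castSucc)
      (fun i m' hm' => lt_of_lt_of_le (hint i m).1 ((hβ i).antitone (Finset.mem_Iic.1 hm')))
      (fun i m' hm' => by
        have h' : m.castSucc < m' := lt_of_not_ge (fun h => hm' (Finset.mem_Iic.2 h))
        have h'' : m.succ ≤ m' := h'
        exact lt_of_le_of_lt ((hβ i).antitone h'') (hint i m).2)
    rwa [hcard] at this
  have hsb : ∀ j : Fin (n + 1), 0 < (-1 : ℝ) ^ (j : ℕ) * F.eval (b j) := by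
    intro j
    induction j using Fin.cases with
    | zero =>
      have := hsgen T ∅ (fun i m hm => absurd hm (Finset.notMem_empty m))
        (fun i m _ => hT i m)
      simpa [hb] using this
    | succ m => simpa [hb] using hSG m
  have hsa : ∀ j : Fin (n + 1), 0 < (-1 : ℝ) ^ ((j : ℕ) + 1) * F.eval (a j) := by
    intro j
    induction j using Fin.lastCases with
    | last =>
      have hcard : (Finset.univ : Finset (Fin (n + 1))).card = n + 1 := by simp
      have := hsgen L Finset.univ (fun i m _ => hL i m)
        (fun i m hm => absurd (mem_univ m) hm)
      rw [hcard] at this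
      simpa [ha, Fin.snoc_last] using this
    | cast m => simpa [ha, Fin.snoc_castSucc] using hSG m
  -- roots in each interval
  have hroot : ∀ j : Fin (n + 1), ∃ x, x ∈ Set.Ioo (a j) (b j) ∧ F.eval x = 0 := by
    intro j
    refine aux_exists_root_Ioo F (habj j) ?_
    have h1 := hsa j
    have h2 := hsb j
    have hs2 : ((-1 : ℝ) ^ (j : ℕ)) * ((-1 : ℝ) ^ (j : ℕ)) = 1 := by
      rw [← pow_add]; exact Even.neg_one_pow ⟨(j : ℕ), rfl⟩
    have h1' : 0 < -((-1 : ℝ) ^ (j : ℕ)) * F.eval (a j) := by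
      rw [pow_succ] at h1; nlinarith [h1]
    nlinarith [mul_pos h1' h2, hs2]
  choose x hx1 hx2 using hroot
  have hxa : StrictAnti x := by
    have hm : StrictMono fun j => -x j := by
      refine Fin.strictMono_iff_lt_succ.2 fun i => ?_
      have h1 : x i.succ < b i.succ := (hx1 i.succ).2
      have h2 : a i.castSucc < x i.castSucc := (hx1 i.castSucc).1
      have hb' : b i.succ = γ i := by simp [hb]
      have ha' : a i.castSucc = γ i := by simp [ha]
      simp only [neg_lt_neg_iff]
      calc x i.succ < γ i := hb' ▸ h1
        _ < x i.castSucc := ha' ▸ h2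
    intro u v huv
    have := hm huv
    simpa using this
  -- polynomial identity
  have hmonic : ∀ y : Fin (n + 1) → ℝ, (∏ j, (X - C (y j))).Monic :=
    fun y => monic_prod_of_monic _ _ fun j _ => monic_X_sub_C _
  have hprodDeg : ∀ y : Fin (n + 1) → ℝ, (∏ j, (X - C (y j))).natDegree = n + 1 := by
    intro y
    rw [Polynomial.natDegree_prod_of_monic _ _ fun j _ => monic_X_sub_C _]
    simp
  have hcoeffTop : ∀ (c0 : ℝ) (y : Fin (n + 1) → ℝ),
      (C c0 * ∏ j, (X - C (y j))).coeff (n + 1) = c0 := by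
    intro c0 y
    rw [Polynomial.coeff_C_mul]
    have := (hmonic y).coeff_natDegree
    rw [hprodDeg y] at this
    rw [this, mul_one]
  have hdegle : ∀ (c0 : ℝ) (y : Fin (n + 1) → ℝ),
      (C c0 * ∏ j, (X - C (y j))).natDegree ≤ n + 1 := by
    intro c0 y
    refine (Polynomial.natDegree_mul_le).trans ?_
    simp [hprodDeg y]
  set P : Polynomial ℝ := C (∑ i, c i) * ∏ j, (X - C (x j)) with hP
  have hFP : F = P := by
    have hFdeg : F.natDegree ≤ n + 1 :=
      Polynomial.natDegree_sum_le_of_forall_le _ _ fun i _ => hdegle _ _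
    have hFcoeff : F.coeff (n + 1) = ∑ i, c i := by
      rw [hF, Polynomial.finset_sum_coeff]
      exact Finset.sum_congr rfl fun i _ => hcoeffTop _ _
    set q : Polynomial ℝ := F - P with hq
    have hqdeg : q.natDegree ≤ n + 1 :=
      (Polynomial.natDegree_sub_le _ _).trans (max_le hFdeg (hdegle _ _))
    have hqcoeff : q.coeff (n + 1) = 0 := by
      rw [hq, Polynomial.coeff_sub, hFcoeff, hP, hcoeffTop, sub_self]
    have hqlt : q.natDegree < n + 1 := by
      rcases eq_or_ne q 0 with h0 | h0
      · simp [h0]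
      · refine lt_of_le_of_ne hqdeg fun hEq => ?_
        exact h0 (Polynomial.leadingCoeff_eq_zero.1
          (by rw [Polynomial.leadingCoeff, hEq, hqcoeff]))
    have hzero : q = 0 := by
      refine Polynomial.eq_zero_of_natDegree_lt_card_of_eval_eq_zero q
        hxa.injective (fun j => ?_) (by simpa using hqlt)
      rw [hq, Polynomial.eval_sub, (hx2 j), hP]
      have : Polynomial.eval (x j) (∏ j', (X - C (x j'))) = 0 := by
        rw [Polynomial.eval_prod]
        exact Finset.prod_eq_zero (mem_univ j) (by simp)
      simp [this]
    have := sub_eq_zero.1 hzero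
    exact this
  refine ⟨x, hxa, hFP, fun j => ⟨?_, ?_⟩⟩
  · -- ∃ i, x j ≤ β i j
    by_contra hcon
    push_neg at hcon
    have := hsgen (x j) (Finset.Iio j)
      (fun i m hm => ?_) (fun i m hm => ?_)
    · rw [hx2 j] at this; simp at this
    · -- m < j : x j < β i m
      have hmj : m < j := Finset.mem_Iio.1 hm
      have hj0 : j ≠ 0 := by
        rintro rfl; exact absurd hmj (Fin.not_lt_zero m)
      obtain ⟨j', rfl⟩ := Fin.exists_succ_eq.2 hj0
      have hmle : m ≤ j'.castSucc := by
        have : (m : ℕ) < (j' : ℕ) + 1 := hmj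
        exact Fin.le_def.2 (by simpa using Nat.lt_succ_iff.1 this)
      have h1 : x j'.succ < b j'.succ := (hx1 j'.succ).2
      have hb' : b j'.succ = γ j' := by simp [hb]
      calc x j'.succ < γ j' := hb' ▸ h1
        _ < β i j'.castSucc := (hint i j').1
        _ ≤ β i m := (hβ i).antitone hmle
    · -- m ≥ j : β i m < x j
      have hjm : j ≤ m := not_lt.1 fun h => hm (Finset.mem_Iio.2 h)
      calc β i m ≤ β i j := (hβ i).antitone hjm
        _ < x j := hcon i
  · -- ∃ i, β i j ≤ x j
    by_contra hcon
    push_neg at hcon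
    have := hsgen (x j) (Finset.Iic j)
      (fun i m hm => lt_of_lt_of_le (hcon i) ((hβ i).antitone (Finset.mem_Iic.1 hm)))
      (fun i m hm => ?_)
    · rw [hx2 j] at this; simp at this
    · have hjm : j < m := lt_of_not_ge fun h => hm (Finset.mem_Iic.2 h)
      have hjlast : j ≠ Fin.last n := by
        rintro rfl; exact absurd hjm (not_lt.2 (Fin.le_last m))
      set j' := j.castPred hjlast with hj'
      have hjeq : j'.castSucc = j := Fin.castSucc_castPred j hjlast
      have hsm : j'.succ ≤ m := by
        rw [← hjeq] at hjm
        exact hjm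
      have ha' : a j'.castSucc = γ j' := by simp [ha]
      calc β i m ≤ β i j'.succ := (hβ i).antitone hsm
        _ < γ j' := (hint i j').2
        _ = a j := by rw [← ha', hjeq]
        _ < x j := (hx1 j).1

/-- If real-rooted polynomials `f_1,…,f_k` of degree `n+1` with positive leading
coefficients (with decreasingly ordered roots `β i`) have a common interlacing
(a polynomial with roots `γ`), then their sum is real-rooted and for every index `j`
there are `i`, `i'` with `λ_j(f_i) ≥ λ_j(∑ f) ≥ λ_j(f_{i'})`. -/
theorem common_interlacing_sum_roots
    (n k : ℕ) (hk : 0 < k)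
    (f : Fin k → Polynomial ℝ)
    (c : Fin k → ℝ) (β : Fin k → Fin (n + 1) → ℝ) (γ : Fin n → ℝ)
    (hc : ∀ i, 0 < c i) (hβ : ∀ i, Antitone (β i)) (hγ : Antitone γ)
    (hf : ∀ i, f i = C (c i) * ∏ j, (X - C (β i j)))
    (hint : ∀ i, ∀ j : Fin n, γ j ≤ β i j.castSucc ∧ β i j.succ ≤ γ j) :
    ∃ βS : Fin (n + 1) → ℝ, Antitone βS ∧
      (∑ i, f i) = C (∑ i, c i) * ∏ j, (X - C (βS j)) ∧
      ∀ j : Fin (n + 1), ∃ i i' : Fin k, βS j ≤ β i j ∧ β i' j ≤ βS j := by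
  classical
  haveI : Nonempty (Fin k) := ⟨⟨0, hk⟩⟩
  set ε : ℕ → ℝ := fun m => 1 / (m + 1) with hεdef
  have hε : ∀ m, 0 < ε m := fun m => by positivity
  have hε0 : Filter.Tendsto ε Filter.atTop (nhds 0) := tendsto_one_div_add_atTop_nhds_zero_nat
  -- perturbed strict data
  have H : ∀ m : ℕ, ∃ x : Fin (n + 1) → ℝ, StrictAnti x ∧
      (∑ i, C (c i) * ∏ j, (X - C (β i j - ε m * (j : ℕ)))) =
        C (∑ i, c i) * ∏ j, (X - C (x j)) ∧
      ∀ j : Fin (n + 1), (∃ i, x j ≤ β i j - ε m * (j : ℕ)) ∧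
        (∃ i, β i j - ε m * (j : ℕ) ≤ x j) := by
    intro m
    refine aux_strict n k hk c (fun i j => β i j - ε m * (j : ℕ))
      (fun j => γ j - ε m * ((j : ℕ) + 2⁻¹)) hc ?_ ?_
    · intro i u v huv
      have h1 : β i v ≤ β i u := hβ i huv.le
      have h2 : (u : ℕ) < (v : ℕ) := huv
      have h3 : ε m * (u : ℕ) < ε m * (v : ℕ) :=
        mul_lt_mul_of_pos_left (by exact_mod_cast h2) (hε m)
      show β i v - ε m * (v : ℕ) < β i u - ε m * (u : ℕ)
      linarith
    · intro i j
      have h1 := (hint i j).1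
      have h2 := (hint i j).2
      have hem := hε m
      refine ⟨?_, ?_⟩
      · show γ j - ε m * ((j : ℕ) + 2⁻¹) <
            β i j.castSucc - ε m * (((j.castSucc : Fin (n + 1)) : ℕ) : ℝ)
        rw [Fin.coe_castSucc]
        nlinarith
      · show β i j.succ - ε m * (((j.succ : Fin (n + 1)) : ℕ) : ℝ) <
            γ j - ε m * ((j : ℕ) + 2⁻¹)
        rw [Fin.val_succ]
        push_cast
        nlinarith
  choose x hxa hxe hxb using H
  -- compactness bounds
  obtain ⟨Hi, hHi⟩ : ∃ T, ∀ i j, β i j ≤ T :=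
    ⟨Finset.univ.sup' univ_nonempty fun p : Fin k × Fin (n + 1) => β p.1 p.2,
      fun i j => Finset.le_sup' (fun p : Fin k × Fin (n + 1) => β p.1 p.2) (mem_univ (i, j))⟩
  obtain ⟨Lo, hLo⟩ : ∃ L, ∀ i j, L ≤ β i j :=
    ⟨Finset.univ.inf' univ_nonempty fun p : Fin k × Fin (n + 1) => β p.1 p.2,
      fun i j => Finset.inf'_le (fun p : Fin k × Fin (n + 1) => β p.1 p.2) (mem_univ (i, j))⟩
  set y : ℕ → Fin (n + 1) → ℝ := fun m j => x m j + ε m * (j : ℕ) with hy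
  have hyK : ∀ m, y m ∈ Set.pi Set.univ fun _ : Fin (n + 1) => Set.Icc Lo Hi := by
    intro m j _
    obtain ⟨⟨i1, hi1⟩, ⟨i2, hi2⟩⟩ := hxb m j
    exact ⟨le_trans (hLo i2 j) (by simp only [hy]; linarith),
      le_trans (by simp only [hy]; linarith) (hHi i1 j)⟩
  obtain ⟨βS, _, φ, hφ, hlim⟩ :=
    (isCompact_univ_pi fun _ : Fin (n + 1) => isCompact_Icc).tendsto_subseq hyK
  have hεφ : Filter.Tendsto (fun m => ε (φ m)) Filter.atTop (nhds 0) :=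
    hε0.comp hφ.tendsto_atTop
  have hcomp : ∀ j, Filter.Tendsto (fun m => y (φ m) j) Filter.atTop (nhds (βS j)) :=
    fun j => tendsto_pi_nhds.1 hlim j
  have hxlim : ∀ j, Filter.Tendsto (fun m => x (φ m) j) Filter.atTop (nhds (βS j)) := by
    intro j
    have : (fun m => x (φ m) j) = fun m => y (φ m) j - ε (φ m) * (j : ℕ) := by
      funext m; simp [hy]
    rw [this]
    have := (hcomp j).sub (hεφ.mul_const ((j : ℕ) : ℝ))
    simpa using this
  refine ⟨βS, ?_, ?_, ?_⟩
  · -- Antitone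
    intro u v huv
    exact le_of_tendsto_of_tendsto' (hxlim v) (hxlim u)
      (fun m => ((hxa (φ m)).antitone huv))
  · -- identity
    have hsum : (∑ i, f i) = ∑ i, C (c i) * ∏ j, (X - C (β i j)) :=
      Finset.sum_congr rfl fun i _ => hf i
    rw [hsum]
    ext t
    set G : (Fin (n + 1) → ℝ) → ℝ :=
      fun z => (∑ i, c i) * (∏ j, (X - C (z j))).coeff t with hG
    have hGcont : Continuous G := continuous_const.mul (aux_coeff_continuous _ t)
    set Φ : ℝ → ℝ :=
      fun e => ∑ i, c i * (∏ j : Fin (n + 1), (X - C (β i j - e * (j : ℕ)))).coeff t with hΦ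
    have hΦcont : Continuous Φ := by
      refine continuous_finset_sum _ fun i _ => continuous_const.mul ?_
      exact (aux_coeff_continuous _ t).comp
        (continuous_pi fun j => continuous_const.sub (continuous_id.mul continuous_const))
    have hΦeval : ∀ m, Φ (ε m) = G (x m) := by
      intro m
      calc Φ (ε m) = (∑ i, C (c i) * ∏ j : Fin (n + 1),
            (X - C (β i j - ε m * (j : ℕ)))).coeff t := by
            rw [Polynomial.finset_sum_coeff]
            exact (Finset.sum_congr rfl fun i _ => (Polynomial.coeff_C_mul _).symm)
        _ = (C (∑ i, c i) * ∏ j, (X - C (x m j))).coeff t := by rw [hxe m]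
        _ = G (x m) := by rw [Polynomial.coeff_C_mul]
    have h1 : Filter.Tendsto (fun m => Φ (ε (φ m))) Filter.atTop (nhds (Φ 0)) :=
      (hΦcont.tendsto 0).comp hεφ
    have h2 : Filter.Tendsto (fun m => G (x (φ m))) Filter.atTop (nhds (G βS)) :=
      (hGcont.tendsto βS).comp (tendsto_pi_nhds.2 hxlim)
    have h12 : (fun m => Φ (ε (φ m))) = fun m => G (x (φ m)) := funext fun m => hΦeval (φ m)
    have hlimeq : Φ 0 = G βS := tendsto_nhds_unique (h12 ▸ h1) h2
    have hΦ0 : Φ 0 = (∑ i, C (c i) * ∏ j, (X - C (β i j))).coeff t := by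
      rw [Polynomial.finset_sum_coeff]
      simp only [hΦ, zero_mul, sub_zero]
      exact (Finset.sum_congr rfl fun i _ => (Polynomial.coeff_C_mul _).symm)
    have hGS : G βS = (C (∑ i, c i) * ∏ j, (X - C (βS j))).coeff t := by
      rw [Polynomial.coeff_C_mul]
    rw [← hΦ0, hlimeq, hGS]
  · -- bounds
    intro j
    obtain ⟨i1, _, hi1⟩ := Finset.exists_max_image Finset.univ (fun i => β i j) univ_nonempty
    obtain ⟨i2, _, hi2⟩ := Finset.exists_min_image Finset.univ (fun i => β i j) univ_nonempty
    refine ⟨i1, i2, ?_, ?_⟩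
    · refine le_of_tendsto (hcomp j) (Filter.Eventually.of_forall fun m => ?_)
      obtain ⟨i, hi⟩ := (hxb (φ m) j).1
      have : y (φ m) j ≤ β i j := by simp only [hy]; linarith
      exact this.trans (hi1 i (mem_univ i))
    · refine ge_of_tendsto (hcomp j) (Filter.Eventually.of_forall fun m => ?_)
      obtain ⟨i, hi⟩ := (hxb (φ m) j).2
      have : β i j ≤ y (φ m) j := by simp only [hy]; linarith
      exact (hi2 i (mem_univ i)).trans this
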